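/- Let V be a real vector space with a symmetric bilinear form B, and let H ∈ V satisfy B(H,H) > 0 with B negative definite on H^⊥ = {N ∈ V : B(H,N) = 0}. Let β₁ = h₁H + N₁ and β₂ = h₂H + N₂ with N₁, N₂ ∈ H^⊥ and h₁, h₂ > 0. If B(β₁+β₂, β₁+β₂) < 0, then B(β₁,β₁) < 0 or B(β₂,β₂) < 0. -/
import Mathlib


/-- Let `B` be a symmetric bilinear form on a real vector space,
`H` a vector with `B(H,H) > 0` such that `B` is negative definite on `H^⊥`.
If `β₁ = h₁•H + N₁` and `β₂ = h₂•H + N₂` with `N₁, N₂ ∈ H^⊥`, `h₁, h₂ > 0`, and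
`B(β₁+β₂, β₁+β₂) < 0`, then `B(β₁,β₁) < 0` or `B(β₂,β₂) < 0`. -/
theorem stmt_2 (V : Type*) [AddCommGroup V] [Module ℝ V]
    (B : V →ₗ[ℝ] V →ₗ[ℝ] ℝ) (hsymm : ∀ x y : V, B x y = B y x)
    (H : V) (hH : 0 < B H H)
    (hnegdef : ∀ N : V, B H N = 0 → N ≠ 0 → B N N < 0)
    (h₁ h₂ : ℝ) (hh₁ : 0 < h₁) (hh₂ : 0 < h₂)
    (N₁ N₂ : V) (hN₁ : B H N₁ = 0) (hN₂ : B H N₂ = 0)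
    (β₁ β₂ : V) (hβ₁ : β₁ = h₁ • H + N₁) (hβ₂ : β₂ = h₂ • H + N₂)
    (hsum : B (β₁ + β₂) (β₁ + β₂) < 0) :
    B β₁ β₁ < 0 ∨ B β₂ β₂ < 0 := by
  -- nonpositivity on the perp
  have hperp : ∀ N : V, B H N = 0 → B N N ≤ 0 := by
    intro N hN
    by_cases h : N = 0
    · simp [h]
    · exact le_of_lt (hnegdef N hN h)
  -- Cauchy-Schwarz on the perp
  have hCS : (B N₁ N₂) ^ 2 ≤ (B N₁ N₁) * (B N₂ N₂) := by
    have key : ∀ t : ℝ, 0 ≤ (-(B N₂ N₂)) * (t * t) + (-(2 * B N₁ N₂)) * t + (-(B N₁ N₁)) := by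
      intro t
      have hmem : B H (N₁ + t • N₂) = 0 := by
        simp [map_add, map_smul, hN₁, hN₂]
      have := hperp _ hmem
      have hexp : B (N₁ + t • N₂) (N₁ + t • N₂)
          = B N₁ N₁ + 2 * t * B N₁ N₂ + t ^ 2 * B N₂ N₂ := by
        simp [map_add, map_smul, LinearMap.add_apply, LinearMap.smul_apply,
          smul_eq_mul, hsymm N₂ N₁]
        ring
      rw [hexp] at this
      nlinarith
    have := discrim_le_zero key
    simp only [discrim] at this
    nlinarith
  by_contra hcon
  push_neg at hcon
  obtain ⟨hb1, hb2⟩ := hcon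
  have e1 : B β₁ β₁ = h₁ ^ 2 * B H H + B N₁ N₁ := by
    rw [hβ₁]
    simp [map_add, map_smul, LinearMap.add_apply, LinearMap.smul_apply, smul_eq_mul,
      hN₁, hsymm N₁ H]
    ring
  have e2 : B β₂ β₂ = h₂ ^ 2 * B H H + B N₂ N₂ := by
    rw [hβ₂]
    simp [map_add, map_smul, LinearMap.add_apply, LinearMap.smul_apply, smul_eq_mul,
      hN₂, hsymm N₂ H]
    ring
  have esum : B (β₁ + β₂) (β₁ + β₂)
      = (h₁ + h₂) ^ 2 * B H H + B N₁ N₁ + 2 * B N₁ N₂ + B N₂ N₂ := by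
    rw [hβ₁, hβ₂]
    simp [map_add, map_smul, LinearMap.add_apply, LinearMap.smul_apply, smul_eq_mul,
      hN₁, hN₂, hsymm N₁ H, hsymm N₂ H, hsymm N₂ N₁]
    ring
  rw [e1] at hb1; rw [e2] at hb2; rw [esum] at hsum
  have p1 := hperp N₁ hN₁
  have p2 := hperp N₂ hN₂
  -- |B N₁ N₂| ≤ h₁ h₂ B H H
  have hle : -(h₁ * h₂ * B H H) ≤ B N₁ N₂ := by
    nlinarith [sq_nonneg (B N₁ N₂), sq_nonneg (h₁ * h₂ * B H H + B N₁ N₂),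
      mul_pos hh₁ hh₂, mul_pos (mul_pos hh₁ hh₂) hH]
  nlinarith [mul_pos hh₁ hh₂]
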